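/- For c_w with 0 < c_w < √3 and c_b ≥ 0, the map f(x) = c_b² + (c_w²/6)(1 − e^{−2x}) has a unique fixed point σ_a² ≥ 0, and every sequence defined by x_{ℓ+1} = f(x_ℓ) with x_0 ≥ 0 converges to σ_a² at an exponential (geometric) rate. -/

import Mathlib

open Filter Real

lemma exp_lip (a b : ℝ) (ha : 0 ≤ a) (hb : 0 ≤ b) :
    |Real.exp (-2 * a) - Real.exp (-2 * b)| ≤ 2 * |a - b| := by
  wlog h : b ≤ a generalizing a b
  · have := this b a hb ha (le_of_not_ge h)
    rw [abs_sub_comm, abs_sub_comm a b]; exact this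
  have h1 : Real.exp (-2 * b) ≤ 1 := Real.exp_le_one_iff.mpr (by linarith)
  have h2 : 1 - 2 * (a - b) ≤ Real.exp (-2 * (a - b)) := by
    have := Real.add_one_le_exp (-2 * (a - b)); linarith
  have h3 : Real.exp (-2 * a) = Real.exp (-2 * b) * Real.exp (-2 * (a - b)) := by
    rw [← Real.exp_add]; ring_nf
  have h4 : Real.exp (-2 * a) ≤ Real.exp (-2 * b) :=
    Real.exp_le_exp.mpr (by linarith)
  have h5 : (0:ℝ) < Real.exp (-2 * (a - b)) := Real.exp_pos _
  rw [abs_sub_comm, abs_of_nonneg (by linarith), abs_of_nonneg (by linarith)]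
  nlinarith [Real.exp_pos (-2 * b)]

/-- For `0 < c_w < √3` and `c_b ≥ 0`, the map `f(x) = c_b² + (c_w²/6)(1 − e^{−2x})`
has a unique nonnegative fixed point `σ_a²`, and every iterate sequence starting
from `x₀ ≥ 0` converges to it at a geometric rate. -/
theorem siren_variance_fixed_point_geometric (cw cb : ℝ)
    (hcw0 : 0 < cw) (hcw : cw < Real.sqrt 3) (hcb : 0 ≤ cb) :
    ∃ σa2 : ℝ, 0 ≤ σa2 ∧
      cb ^ 2 + cw ^ 2 / 6 * (1 - Real.exp (-2 * σa2)) = σa2 ∧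
      (∀ y : ℝ, 0 ≤ y → cb ^ 2 + cw ^ 2 / 6 * (1 - Real.exp (-2 * y)) = y → y = σa2) ∧
      ∀ x : ℕ → ℝ, 0 ≤ x 0 →
        (∀ n, x (n + 1) = cb ^ 2 + cw ^ 2 / 6 * (1 - Real.exp (-2 * x n))) →
        ∃ C r : ℝ, 0 ≤ C ∧ 0 ≤ r ∧ r < 1 ∧ ∀ n, |x n - σa2| ≤ C * r ^ n := by
  have hcw3 : cw ^ 2 < 3 := by
    have h3 : (0:ℝ) ≤ 3 := by norm_num
    nlinarith [Real.sq_sqrt h3, Real.sqrt_nonneg 3]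
  set S := Set.Ici (0:ℝ)
  haveI : CompleteSpace S := isClosed_Ici.completeSpace_coe
  have hmem : ∀ p : S, cb ^ 2 + cw ^ 2 / 6 * (1 - Real.exp (-2 * p.1)) ∈ S := by
    intro p
    have hp : (0:ℝ) ≤ p.1 := p.2
    have : Real.exp (-2 * p.1) ≤ 1 := Real.exp_le_one_iff.mpr (by linarith)
    have : 0 ≤ 1 - Real.exp (-2 * p.1) := by linarith
    have : 0 ≤ cw ^ 2 / 6 * (1 - Real.exp (-2 * p.1)) := by positivity
    simp only [S, Set.mem_Ici]
    nlinarith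
  set F : S → S := fun p => ⟨cb ^ 2 + cw ^ 2 / 6 * (1 - Real.exp (-2 * p.1)), hmem p⟩ with hF
  have hKnn : (0:ℝ) ≤ cw ^ 2 / 3 := by positivity
  set K : NNReal := ⟨cw ^ 2 / 3, hKnn⟩ with hKdef
  have hKc : (K : ℝ) = cw ^ 2 / 3 := rfl
  have hlip : LipschitzWith K F := by
    apply LipschitzWith.of_dist_le_mul
    intro p q
    have hd : dist (F p) (F q) = |Real.exp (-2 * q.1) - Real.exp (-2 * p.1)| * (cw ^ 2 / 6) := by
      simp only [hF, Subtype.dist_eq, Real.dist_eq]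
      have heq : (cb ^ 2 + cw ^ 2 / 6 * (1 - Real.exp (-2 * p.1)))
          - (cb ^ 2 + cw ^ 2 / 6 * (1 - Real.exp (-2 * q.1)))
          = (Real.exp (-2 * q.1) - Real.exp (-2 * p.1)) * (cw ^ 2 / 6) := by ring
      rw [heq, abs_mul, abs_of_nonneg (show (0:ℝ) ≤ cw ^ 2 / 6 by positivity)]
    have hpq : dist p q = |p.1 - q.1| := by
      simp [Subtype.dist_eq, Real.dist_eq]
    have key := exp_lip q.1 p.1 q.2 p.2
    rw [hd, hpq, hKc]
    have h6 : (0:ℝ) ≤ cw ^ 2 / 6 := by positivity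
    calc |Real.exp (-2 * q.1) - Real.exp (-2 * p.1)| * (cw ^ 2 / 6)
        ≤ (2 * |q.1 - p.1|) * (cw ^ 2 / 6) := by
          exact mul_le_mul_of_nonneg_right key h6
      _ = cw ^ 2 / 3 * |p.1 - q.1| := by rw [abs_sub_comm]; ring
  have hK1 : K < 1 := by
    rw [← NNReal.coe_lt_coe, hKc, NNReal.coe_one]; linarith
  have hcontr : ContractingWith K F := ⟨hK1, hlip⟩
  haveI : Nonempty S := ⟨⟨0, Set.self_mem_Ici⟩⟩
  set fp : S := hcontr.fixedPoint F with hfp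
  have hfix : F fp = fp := hcontr.fixedPoint_isFixedPt
  refine ⟨fp.1, fp.2, ?_, ?_, ?_⟩
  · exact congrArg Subtype.val hfix
  · intro y hy hyfix
    have : F ⟨y, hy⟩ = ⟨y, hy⟩ := Subtype.ext hyfix
    have := hcontr.fixedPoint_unique this
    exact congrArg Subtype.val this
  · intro x hx0 hxrec
    -- show x n = (F^[n] ⟨x 0, hx0⟩).1
    have hiter : ∀ n, x n = (F^[n] ⟨x 0, hx0⟩).1 := by
      intro n
      induction n with
      | zero => simp
      | succ n ih =>
        rw [Function.iterate_succ_apply', hxrec n, ih]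
    refine ⟨dist (⟨x 0, hx0⟩ : S) fp, (K : ℝ), dist_nonneg, K.2, hK1, ?_⟩
    intro n
    have hiterfix : F^[n] fp = fp := Function.IsFixedPt.iterate hfix n
    have := (hlip.iterate n).dist_le_mul (⟨x 0, hx0⟩ : S) fp
    rw [hiterfix] at this
    have hdist : dist (F^[n] ⟨x 0, hx0⟩) fp = |x n - fp.1| := by
      rw [Subtype.dist_eq, Real.dist_eq, hiter n]
    rw [hdist] at this
    calc |x n - fp.1| ≤ (K ^ n : NNReal) * dist (⟨x 0, hx0⟩ : S) fp := this
      _ = dist (⟨x 0, hx0⟩ : S) fp * (K:ℝ) ^ n := by push_cast; ring
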